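/- Let ℓ ≥ 3 be an integer and let G be a simple graph with girth at least ℓ. Let x and y be adjacent vertices of G and let z be a vertex of G reachable from x such that dist_G(x, z) + dist_G(y, z) ≤ ℓ − 2. Then |dist_G(x, z) − dist_G(y, z)| = 1. (This is the key step in the proof of Lemma 5.1 of the paper: for consecutive vertices of a path, the distances to z cannot be equal, so they differ by exactly one.) -/

import Mathlib

open SimpleGraph

/-- A walk that is not a path contains a nontrivial closed subwalk; the remainder is a
walk with the same endpoints whose length complements it. -/
lemma aux_split {V : Type*} {G : SimpleGraph V} :
    ∀ {w v : V} (p : G.Walk w v), ¬ p.IsPath →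
      ∃ (u : V) (q : G.Walk u u) (r : G.Walk w v),
        0 < q.length ∧ q.length + r.length = p.length := by
  classical
  intro w v p
  induction p with
  | nil => intro h; exact absurd (SimpleGraph.Walk.IsPath.nil) h
  | @cons w a v h q ih =>
    intro hnp
    by_cases hw : w ∈ q.support
    · refine ⟨w, SimpleGraph.Walk.cons h (q.takeUntil w hw), q.dropUntil w hw, by simp, ?_⟩
      have := congrArg SimpleGraph.Walk.length (q.take_spec hw)
      rw [SimpleGraph.Walk.length_append] at this
      simp only [SimpleGraph.Walk.length_cons]
      omega
    · have hq : ¬ q.IsPath := by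
        intro hq
        exact hnp ((SimpleGraph.Walk.cons_isPath_iff h q).2 ⟨hq, hw⟩)
      obtain ⟨u, c, r, hc, hlen⟩ := ih hq
      exact ⟨u, c, SimpleGraph.Walk.cons h r, hc, by
        simp only [SimpleGraph.Walk.length_cons]; omega⟩

/-- A path from `u` to `v` containing the edge `s(u,v)` must be a single edge. -/
lemma aux_path_edge {V : Type*} {G : SimpleGraph V} {u v : V} (p : G.Walk u v)
    (hp : p.IsPath) (he : s(u, v) ∈ p.edges) : p.length = 1 := by
  cases p with
  | nil => simp at he
  | @cons _ a _ h q =>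
    rw [SimpleGraph.Walk.edges_cons, List.mem_cons] at he
    rw [SimpleGraph.Walk.cons_isPath_iff] at hp
    rcases he with he | he
    · rw [Sym2.eq_iff] at he
      rcases he with ⟨-, hva⟩ | ⟨hua, hvu⟩
      · subst hva
        have : q = SimpleGraph.Walk.nil := SimpleGraph.Walk.isPath_iff_eq_nil.1 hp.1
        subst this; simp
      · subst hua; exact (h.ne rfl).elim
    · exact absurd (SimpleGraph.Walk.fst_mem_support_of_mem_edges q he) hp.2

/-- Any closed walk of odd length contains a cycle of length at most its length. -/
lemma aux_odd_cycle {V : Type*} {G : SimpleGraph V} :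
    ∀ (n : ℕ) {v : V} (c : G.Walk v v), c.length ≤ n → Odd c.length →
      ∃ (u : V) (d : G.Walk u u), d.IsCycle ∧ d.length ≤ c.length := by
  intro n
  induction n with
  | zero =>
    intro v c hle hodd
    interval_cases h : c.length
    · simp at hodd
  | succ n ih =>
    intro v c hle hodd
    cases c with
    | nil => simp at hodd
    | @cons _ w _ h p =>
      by_cases hp : p.IsPath
      · by_cases he : s(v, w) ∈ p.edges
        · have h1 := aux_path_edge (G := G) (u := w) (v := v) p hp (by
            rwa [Sym2.eq_swap] at he)
          have : (SimpleGraph.Walk.cons h p).length = 2 := by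
            simp [h1]
          rw [this] at hodd
          simp [Nat.odd_iff] at hodd
        · refine ⟨v, SimpleGraph.Walk.cons h p, ?_, le_rfl⟩
          exact (SimpleGraph.Walk.cons_isCycle_iff p h).2 ⟨hp, he⟩
      · obtain ⟨u, q, r, hq, hlen⟩ := aux_split p hp
        simp only [SimpleGraph.Walk.length_cons] at hodd hle ⊢
        by_cases hqo : Odd q.length
        · obtain ⟨u', d, hd, hdl⟩ := ih q (by omega) hqo
          exact ⟨u', d, hd, by omega⟩
        · have : Odd (SimpleGraph.Walk.cons h r).length := by
            rw [Nat.odd_iff] at hodd hqo ⊢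
            simp only [SimpleGraph.Walk.length_cons]
            omega
          obtain ⟨u', d, hd, hdl⟩ := ih (SimpleGraph.Walk.cons h r)
            (by simp only [SimpleGraph.Walk.length_cons]; omega) this
          refine ⟨u', d, hd, ?_⟩
          simp only [SimpleGraph.Walk.length_cons] at hdl
          omega

/-- In a graph of girth at least `ℓ ≥ 3`, if `x` and `y` are adjacent,
`z` is reachable from `x`, and `dist(x,z) + dist(y,z) ≤ ℓ - 2`, then the two distances
differ by exactly one. -/
theorem stmt6 {V : Type*} (G : SimpleGraph V) (ℓ : ℕ) (hℓ : 3 ≤ ℓ)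
    (hgirth : ∀ ⦃v : V⦄ (c : G.Walk v v), c.IsCycle → ℓ ≤ c.length)
    (x y z : V) (hxy : G.Adj x y) (hreach : G.Reachable x z)
    (hsum : G.dist x z + G.dist y z ≤ ℓ - 2) :
    G.dist x z = G.dist y z + 1 ∨ G.dist y z = G.dist x z + 1 := by
  have hreachy : G.Reachable y z := (hxy.symm.reachable).trans hreach
  obtain ⟨p, hp⟩ := hreach.exists_walk_length_eq_dist
  obtain ⟨q, hq⟩ := hreachy.exists_walk_length_eq_dist
  -- distances differ by at most one
  have h1 : G.dist x z ≤ G.dist y z + 1 := by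
    have := G.dist_le (SimpleGraph.Walk.cons hxy q)
    simpa [hq] using this
  have h2 : G.dist y z ≤ G.dist x z + 1 := by
    have := G.dist_le (SimpleGraph.Walk.cons hxy.symm p)
    simpa [hp] using this
  -- they cannot be equal
  have hne : G.dist x z ≠ G.dist y z := by
    intro heq
    set d := G.dist x z with hd
    -- closed odd walk of length 2d+1
    have hodd : Odd (SimpleGraph.Walk.cons hxy.symm (p.append q.reverse)).length := by
      simp only [SimpleGraph.Walk.length_cons, SimpleGraph.Walk.length_append,
        SimpleGraph.Walk.length_reverse, hp, hq, ← heq, ← hd]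
      exact ⟨d, by ring⟩
    obtain ⟨u, c, hc, hcl⟩ := aux_odd_cycle _ (SimpleGraph.Walk.cons hxy.symm (p.append q.reverse))
      le_rfl hodd
    have hg := hgirth c hc
    simp only [SimpleGraph.Walk.length_cons, SimpleGraph.Walk.length_append,
      SimpleGraph.Walk.length_reverse, hp, hq, ← heq, ← hd] at hcl
    omega
  omega
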